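/- arXiv:1302.7286 — 6 statements merged into one kernel-verified Lean document; each statement's English description precedes it below -/
import Mathlib

section
/- For a unitary U, projection P onto V, Ũ = (I−P)U, and a_n = PUŨ^{n−1}P, the total return probability R(ψ) = Σ_{n≥1} ‖a_nψ‖² of a unit vector ψ ∈ V satisfies R(ψ) = 1 − lim_{n→∞} ‖Ũ^nψ‖²; in particular R(ψ) ≤ 1. -/
open Filter

/-- With `a_n = P U Ũ^{n-1} P`, the total return probability
`R(ψ) = Σ_{n≥1} ‖a_n ψ‖²` of a unit vector `ψ ∈ V` satisfies
`R(ψ) = 1 - lim_n ‖Ũ^n ψ‖²`; in particular `R(ψ) ≤ 1`. -/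
theorem stmt2 {H : Type*} [NormedAddCommGroup H] [InnerProductSpace ℂ H] [CompleteSpace H]
    (U : H →L[ℂ] H) (hUiso : ∀ x, ‖U x‖ = ‖x‖) (hUsurj : Function.Surjective U)
    (V : Submodule ℂ H) [CompleteSpace V]
    (P : H →L[ℂ] H) (hP : P = V.subtypeL ∘L V.orthogonalProjection)
    (Ut : H →L[ℂ] H) (hUt : Ut = (1 - P) ∘L U)
    (a : ℕ → (H →L[ℂ] H)) (ha : ∀ n, 1 ≤ n → a n = P ∘L U ∘L (Ut ^ (n - 1)) ∘L P)
    (ψ : H) (hψ : ψ ∈ V) (hψ1 : ‖ψ‖ = 1) :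
    ∃ s : ℝ, Tendsto (fun n : ℕ => ‖(Ut ^ n) ψ‖ ^ 2) atTop (nhds s) ∧
      HasSum (fun n : ℕ => ‖a (n + 1) ψ‖ ^ 2) (1 - s) ∧
      (∑' n : ℕ, ‖a (n + 1) ψ‖ ^ 2) ≤ 1 := by
  -- Pythagoras: for all y, ‖(1-P) y‖² + ‖P y‖² = ‖y‖²
  have key : ∀ y : H, ‖((1 - P) : H →L[ℂ] H) y‖ ^ 2 + ‖P y‖ ^ 2 = ‖y‖ ^ 2 := by
    intro y
    have hPy : P y ∈ V := by rw [hP]; exact (V.orthogonalProjection y).2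
    have hyo : y - P y ∈ Vᗮ := by
      rw [hP]; exact V.sub_starProjection_mem_orthogonal y
    have hinner : (inner ℂ (((1 - P) : H →L[ℂ] H) y) (P y) : ℂ) = 0 := by
      simp only [ContinuousLinearMap.sub_apply, ContinuousLinearMap.one_apply]
      rw [inner_eq_zero_symm]
      exact hyo (P y) hPy
    have := norm_add_sq_eq_norm_sq_add_norm_sq_of_inner_eq_zero _ _ hinner
    have hid : ((1 - P) : H →L[ℂ] H) y = y - P y := by
      simp [ContinuousLinearMap.sub_apply]
    rw [hid, sub_add_cancel] at this
    simp only [ContinuousLinearMap.sub_apply, ContinuousLinearMap.one_apply, pow_two]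
    linarith [this]
  set φ : ℕ → H := fun n => (Ut ^ n) ψ with hφ
  have hPψ : P ψ = ψ := by
    rw [hP]; exact V.starProjection_eq_self_iff.mpr hψ
  -- a (n+1) ψ = P (U (φ n))
  have haψ : ∀ n : ℕ, a (n + 1) ψ = P (U (φ n)) := by
    intro n
    rw [ha (n + 1) (Nat.le_add_left 1 n)]
    simp [hPψ, hφ]
  -- the key recursion
  have hrec : ∀ n : ℕ, ‖φ (n + 1)‖ ^ 2 + ‖a (n + 1) ψ‖ ^ 2 = ‖φ n‖ ^ 2 := by
    intro n
    have h1 : φ (n + 1) = ((1 - P) : H →L[ℂ] H) (U (φ n)) := by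
      simp only [hφ, pow_succ']
      rw [hUt]; rfl
    rw [h1, haψ n, key (U (φ n)), hUiso]
  have hanti : Antitone fun n : ℕ => ‖φ n‖ ^ 2 := by
    apply antitone_nat_of_succ_le
    intro n
    rw [← hrec n]
    nlinarith [sq_nonneg ‖a (n + 1) ψ‖]
  have hbdd : BddBelow (Set.range fun n : ℕ => ‖φ n‖ ^ 2) := by
    refine ⟨0, ?_⟩
    rintro x ⟨n, rfl⟩
    positivity
  obtain ⟨s, hs⟩ : ∃ s, Tendsto (fun n : ℕ => ‖φ n‖ ^ 2) atTop (nhds s) :=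
    ⟨_, tendsto_atTop_ciInf hanti hbdd⟩
  have hs0 : 0 ≤ s := le_of_tendsto_of_tendsto' tendsto_const_nhds hs (fun n => by positivity)
  -- partial sums telescope
  have hpartial : ∀ n : ℕ, ∑ k ∈ Finset.range n, ‖a (k + 1) ψ‖ ^ 2 = 1 - ‖φ n‖ ^ 2 := by
    intro n
    induction n with
    | zero => simp [hφ, hψ1]
    | succ n ih =>
      rw [Finset.sum_range_succ, ih]
      have := hrec n
      linarith
  have htend : Tendsto (fun n : ℕ => ∑ k ∈ Finset.range n, ‖a (k + 1) ψ‖ ^ 2) atTop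
      (nhds (1 - s)) := by
    simp only [hpartial]
    exact tendsto_const_nhds.sub hs
  have hsum : HasSum (fun n : ℕ => ‖a (n + 1) ψ‖ ^ 2) (1 - s) := by
    rw [hasSum_iff_tendsto_nat_of_nonneg (fun n => by positivity)]
    exact htend
  exact ⟨s, hs, hsum, by rw [hsum.tsum_eq]; linarith⟩
end

section
/- With a_n = PUŨ^{n−1}P and the survival probabilities s_n(ψ) = ‖Ũ^nψ‖², for every ψ ∈ V and every N ≥ 1 one has Σ_{n=1}^{N} n‖a_nψ‖² = Σ_{n=0}^{N−1} ‖Ũ^nψ‖² − N‖Ũ^Nψ‖². -/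
/-- With `a_n = P U Ũ^{n-1} P`, for every `ψ ∈ V` and every `N ≥ 1`,
`Σ_{n=1}^{N} n ‖a_n ψ‖² = Σ_{n=0}^{N-1} ‖Ũ^n ψ‖² - N ‖Ũ^N ψ‖²`. -/
theorem stmt3 {H : Type*} [NormedAddCommGroup H] [InnerProductSpace ℂ H] [CompleteSpace H]
    (U : H →L[ℂ] H) (hUiso : ∀ x, ‖U x‖ = ‖x‖) (hUsurj : Function.Surjective U)
    (V : Submodule ℂ H) [CompleteSpace V]
    (P : H →L[ℂ] H) (hP : P = V.subtypeL ∘L V.orthogonalProjection)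
    (Ut : H →L[ℂ] H) (hUt : Ut = (1 - P) ∘L U)
    (a : ℕ → (H →L[ℂ] H)) (ha : ∀ n, 1 ≤ n → a n = P ∘L U ∘L (Ut ^ (n - 1)) ∘L P)
    (ψ : H) (hψ : ψ ∈ V) (N : ℕ) (hN : 1 ≤ N) :
    ∑ n ∈ Finset.Icc 1 N, (n : ℝ) * ‖a n ψ‖ ^ 2 =
      (∑ n ∈ Finset.range N, ‖(Ut ^ n) ψ‖ ^ 2) - (N : ℝ) * ‖(Ut ^ N) ψ‖ ^ 2 := by
  -- P ψ = ψ
  have hPψ : P ψ = ψ := by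
    rw [hP]
    exact Submodule.starProjection_eq_self_iff.2 hψ
  -- key Pythagorean step
  have key : ∀ n, 1 ≤ n →
      ‖(Ut ^ (n - 1)) ψ‖ ^ 2 = ‖a n ψ‖ ^ 2 + ‖(Ut ^ n) ψ‖ ^ 2 := by
    intro n hn
    set x := U ((Ut ^ (n - 1)) ψ) with hx
    have haψ : a n ψ = P x := by
      rw [ha n hn]; simp only [ContinuousLinearMap.comp_apply, hPψ, hx]
    have hUtapp : ∀ y, Ut y = U y - P (U y) := by
      intro y; rw [hUt]
      simp [ContinuousLinearMap.sub_apply]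
    have hUtn : (Ut ^ n) ψ = x - P x := by
      have hn' : n = (n - 1) + 1 := (Nat.succ_pred_eq_of_pos hn).symm
      conv_lhs => rw [hn', pow_succ']
      rw [ContinuousLinearMap.mul_apply, hUtapp]
    have hPmem : P x ∈ V := by
      rw [hP]; exact (V.orthogonalProjection x).2
    have hsub : x - P x ∈ Vᗮ := by
      have := Submodule.sub_starProjection_mem_orthogonal (K := V) x
      rw [hP]; exact this
    have hinner : (inner ℂ (P x) (x - P x) : ℂ) = 0 :=
      (Submodule.mem_orthogonal V (x - P x)).1 hsub (P x) hPmem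
    have hpyth := norm_add_sq_eq_norm_sq_add_norm_sq_of_inner_eq_zero (P x) (x - P x) hinner
    have hxsum : P x + (x - P x) = x := by abel
    rw [hxsum] at hpyth
    have hnormx : ‖x‖ = ‖(Ut ^ (n - 1)) ψ‖ := hUiso _
    rw [haψ, hUtn, ← hnormx, pow_two, pow_two, pow_two]
    exact hpyth
  -- induction on N
  suffices hgen : ∀ M : ℕ, 1 ≤ M → ∑ n ∈ Finset.Icc 1 M, (n : ℝ) * ‖a n ψ‖ ^ 2 =
      (∑ n ∈ Finset.range M, ‖(Ut ^ n) ψ‖ ^ 2) - (M : ℝ) * ‖(Ut ^ M) ψ‖ ^ 2 from hgen N hN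
  intro N hN
  induction N with
  | zero => omega
  | succ M ih =>
    rcases Nat.eq_or_lt_of_le hN with h1 | h1
    · -- N = 1
      have hM : M = 0 := by omega
      subst hM
      simp only [Finset.Icc_self, Finset.sum_singleton, Finset.range_one, Finset.sum_singleton]
      have := key 1 le_rfl
      simp only [Nat.sub_self, pow_zero, ContinuousLinearMap.one_apply] at this
      simp only [Finset.sum_range_one, pow_zero, ContinuousLinearMap.one_apply, Nat.cast_one, Nat.cast_zero,
        Nat.cast_add, zero_add, one_mul]
      linarith
    · have hM1 : 1 ≤ M := by omega
      have ihM := ih hM1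
      rw [Finset.sum_Icc_succ_top (by omega : 1 ≤ M + 1), ihM,
        Finset.sum_range_succ]
      have hk := key (M + 1) (by omega)
      simp only [Nat.add_sub_cancel] at hk
      push_cast [-FunLike.coe_pow_eq_iterate]
      nlinarith [hk]
end

section
/- For a V-recurrent unit vector ψ ∈ V (i.e. Σ_{n≥1}‖a_nψ‖² = 1), the expected return time satisfies τ(ψ) = Σ_{n≥1} n‖a_nψ‖² = Σ_{n≥0} ‖Ũ^nψ‖², where both sides may be infinite simultaneously. -/
open scoped ENNReal

/-- For a `V`-recurrent unit vector `ψ ∈ V` (i.e. `Σ_{n≥1} ‖a_n ψ‖² = 1`),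
the expected return time satisfies `τ(ψ) = Σ_{n≥1} n ‖a_n ψ‖² = Σ_{n≥0} ‖Ũ^n ψ‖²`,
where both sides may be infinite simultaneously (the sums are taken in `ℝ≥0∞`). -/
theorem stmt5 {H : Type*} [NormedAddCommGroup H] [InnerProductSpace ℂ H] [CompleteSpace H]
    (U : H →L[ℂ] H) (hUiso : ∀ x, ‖U x‖ = ‖x‖) (hUsurj : Function.Surjective U)
    (V : Submodule ℂ H) [CompleteSpace V]
    (P : H →L[ℂ] H) (hP : P = V.subtypeL ∘L V.orthogonalProjection)
    (Ut : H →L[ℂ] H) (hUt : Ut = (1 - P) ∘L U)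
    (a : ℕ → (H →L[ℂ] H)) (ha : ∀ n, 1 ≤ n → a n = P ∘L U ∘L (Ut ^ (n - 1)) ∘L P)
    (ψ : H) (hψ : ψ ∈ V) (hψ1 : ‖ψ‖ = 1)
    (hrec : ∑' n : ℕ, ((‖a (n + 1) ψ‖₊ : ℝ≥0∞)) ^ 2 = 1) :
    ∑' n : ℕ, ((n : ℝ≥0∞) + 1) * (‖a (n + 1) ψ‖₊ : ℝ≥0∞) ^ 2 =
      ∑' n : ℕ, (‖(Ut ^ n) ψ‖₊ : ℝ≥0∞) ^ 2 := by
  set f : ℕ → ℝ≥0∞ := fun n => (‖a (n + 1) ψ‖₊ : ℝ≥0∞) ^ 2 with hf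
  have hPproj : ∀ x : H, P x = (V.orthogonalProjection x : H) := by
    intro x; rw [hP]; rfl
  have hPψ : P ψ = ψ := by
    rw [hPproj]; exact Submodule.starProjection_eq_self_iff.mpr hψ
  have pyth : ∀ x : H, ‖x‖ ^ 2 = ‖P x‖ ^ 2 + ‖x - P x‖ ^ 2 := by
    intro x
    have h1 : (inner ℂ (P x) (x - P x) : ℂ) = 0 := by
      apply Submodule.inner_right_of_mem_orthogonal (K := V)
      · rw [hPproj]; exact (V.orthogonalProjection x).2
      · rw [hPproj]; exact Submodule.sub_starProjection_mem_orthogonal (K := V) x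
    have h2 := norm_add_sq_eq_norm_sq_add_norm_sq_of_inner_eq_zero _ _ h1
    have h3 : P x + (x - P x) = x := by abel
    rw [h3] at h2
    linarith [h2]
  -- recursion for the norms
  have hrecur : ∀ n : ℕ,
      (‖(Ut ^ n) ψ‖₊ : ℝ≥0∞) ^ 2 = f n + (‖(Ut ^ (n + 1)) ψ‖₊ : ℝ≥0∞) ^ 2 := by
    intro n
    have hx1 : (Ut ^ (n + 1)) ψ = U ((Ut ^ n) ψ) - P (U ((Ut ^ n) ψ)) := by
      rw [pow_succ']
      simp [hUt, ContinuousLinearMap.mul_apply, ContinuousLinearMap.comp_apply,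
        ContinuousLinearMap.sub_apply, ContinuousLinearMap.one_apply, sub_smul]
    have ha1 : a (n + 1) ψ = P (U ((Ut ^ n) ψ)) := by
      rw [ha (n + 1) (Nat.le_add_left 1 n)]
      simp [ContinuousLinearMap.comp_apply, hPψ]
    have hreal : ‖(Ut ^ n) ψ‖ ^ 2 = ‖a (n + 1) ψ‖ ^ 2 + ‖(Ut ^ (n + 1)) ψ‖ ^ 2 := by
      rw [ha1, hx1, ← pyth (U ((Ut ^ n) ψ)), hUiso]
    have hnn : ‖(Ut ^ n) ψ‖₊ ^ 2 = ‖a (n + 1) ψ‖₊ ^ 2 + ‖(Ut ^ (n + 1)) ψ‖₊ ^ 2 := by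
      apply NNReal.coe_injective
      push_cast
      simpa using hreal
    have := congrArg (fun x : NNReal => (x : ℝ≥0∞)) hnn
    simpa [hf, ENNReal.coe_pow, ENNReal.coe_add] using this
  -- tail sums
  set T : ℕ → ℝ≥0∞ := fun n => ∑' k : ℕ, f (n + k) with hT
  have hT0 : T 0 = 1 := by
    rw [hT]; simpa using hrec
  have hTsucc : ∀ n : ℕ, T n = f n + T (n + 1) := by
    intro n
    rw [hT]
    show (∑' k : ℕ, f (n + k)) = f n + ∑' k : ℕ, f (n + 1 + k)
    rw [tsum_eq_zero_add' (f := fun k => f (n + k)) ENNReal.summable]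
    congr 1
    exact tsum_congr fun k => congrArg f (by omega)
  have hfne : ∀ n, f n ≠ ⊤ := by
    intro n
    have h1 : f n ≤ ∑' m : ℕ, f m := ENNReal.le_tsum n
    rw [hrec] at h1
    exact (h1.trans_lt ENNReal.one_lt_top).ne
  have hgT : ∀ n : ℕ, (‖(Ut ^ n) ψ‖₊ : ℝ≥0∞) ^ 2 = T n := by
    intro n
    induction n with
    | zero =>
      have : ‖ψ‖₊ = 1 := by ext; simp [hψ1]
      simp [this, hT0]
    | succ n ih =>
      have h1 : f n + (‖(Ut ^ (n + 1)) ψ‖₊ : ℝ≥0∞) ^ 2 = f n + T (n + 1) := by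
        rw [← hrecur n, ih, hTsucc n]
      exact (ENNReal.add_right_inj (hfne n)).mp h1
  -- F n k
  set F : ℕ → ℕ → ℝ≥0∞ := fun n k => if n ≤ k then f k else 0 with hF
  have hTF : ∀ n : ℕ, T n = ∑' k : ℕ, F n k := by
    intro n
    have hinj : Function.Injective (fun k : ℕ => n + k) := add_right_injective n
    have hsupp : Function.support (F n) ⊆ Set.range (fun k : ℕ => n + k) := by
      intro k hk
      rw [hF] at hk
      simp only [Function.mem_support] at hk
      by_cases h : n ≤ k
      · exact ⟨k - n, by show n + (k - n) = k; omega⟩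
      · simp [h] at hk
    have := Function.Injective.tsum_eq hinj hsupp
    rw [hT, ← this]
    exact tsum_congr fun k => by simp [hF]
  have hcount : ∀ k : ℕ, ∑' n : ℕ, F n k = ((k : ℝ≥0∞) + 1) * f k := by
    intro k
    rw [tsum_eq_sum (s := Finset.range (k + 1)) (by
      intro n hn
      simp only [Finset.mem_range, not_lt] at hn
      simp [hF, Nat.not_le.mpr (by omega : k < n), (by omega : ¬ n ≤ k)])]
    have : ∀ n ∈ Finset.range (k + 1), F n k = f k := by
      intro n hn
      simp only [Finset.mem_range] at hn
      simp [hF, Nat.le_of_lt_succ hn]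
    rw [Finset.sum_congr rfl this, Finset.sum_const, Finset.card_range, nsmul_eq_mul]
    push_cast
    ring
  calc ∑' n : ℕ, ((n : ℝ≥0∞) + 1) * f n
      = ∑' k : ℕ, ∑' n : ℕ, F n k := by
        exact tsum_congr fun k => (hcount k).symm
    _ = ∑' n : ℕ, ∑' k : ℕ, F n k := ENNReal.tsum_comm
    _ = ∑' n : ℕ, T n := tsum_congr fun n => (hTF n).symm
    _ = ∑' n : ℕ, (‖(Ut ^ n) ψ‖₊ : ℝ≥0∞) ^ 2 := tsum_congr fun n => (hgT n).symm
end

section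
/- Let U be a unitary operator on a finite-dimensional complex Hilbert space H, V a subspace with orthogonal projection P, and suppose U has no eigenvector lying in V^⊥. Then every eigenvalue of Ũ = (I−P)U has modulus strictly less than 1, and every eigenvalue of A = (I−P)U(I−P) has modulus strictly less than 1. -/
open scoped InnerProductSpace

/-- Let `U` be unitary on a finite-dimensional complex Hilbert space `H`,
`V` a subspace with orthogonal projection `P`, and suppose `U` has no eigenvector in `V⊥`.
Then every eigenvalue of `Ũ = (I-P)U` and of `A = (I-P)U(I-P)` has modulus `< 1`. -/
theorem stmt6 {H : Type*} [NormedAddCommGroup H] [InnerProductSpace ℂ H]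
    [FiniteDimensional ℂ H]
    (U : H →L[ℂ] H) (hUiso : ∀ x, ‖U x‖ = ‖x‖) (hUsurj : Function.Surjective U)
    (V : Submodule ℂ H)
    (P : H →L[ℂ] H) (hP : P = V.subtypeL ∘L V.orthogonalProjection)
    (Ut A : H →L[ℂ] H) (hUt : Ut = (1 - P) ∘L U) (hA : A = (1 - P) ∘L U ∘L (1 - P))
    (hno : ∀ (v : H) (μ : ℂ), v ∈ Vᗮ → U v = μ • v → v = 0) :
    (∀ (v : H) (μ : ℂ), v ≠ 0 → Ut v = μ • v → ‖μ‖ < 1) ∧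
    (∀ (v : H) (μ : ℂ), v ≠ 0 → A v = μ • v → ‖μ‖ < 1) := by
  have h1P : ∀ x : H, (1 - P) x = x - P x := by
    intro x
    simp only [ContinuousLinearMap.sub_apply, ContinuousLinearMap.one_apply]
  -- basic facts about the orthogonal projection
  have hPmem : ∀ x, P x ∈ V := by
    intro x; rw [hP]; exact (V.orthogonalProjection x).2
  have hsub : ∀ x, x - P x ∈ Vᗮ := by
    intro x; rw [hP]; exact V.sub_starProjection_mem_orthogonal x
  have hpyth : ∀ x : H, ‖x‖ ^ 2 = ‖P x‖ ^ 2 + ‖x - P x‖ ^ 2 := by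
    intro x
    have h0 : ⟪P x, x - P x⟫_ℂ = 0 := (hsub x) (P x) (hPmem x)
    have h1 := norm_add_sq_eq_norm_sq_add_norm_sq_of_inner_eq_zero (P x) (x - P x) h0
    have h2 : P x + (x - P x) = x := by abel
    rw [h2] at h1
    simpa [pow_two] using h1
  -- first part
  have part1 : ∀ (v : H) (μ : ℂ), v ≠ 0 → Ut v = μ • v → ‖μ‖ < 1 := by
    intro v μ hv hvm
    have hUtv : U v - P (U v) = μ • v := by
      rw [hUt] at hvm
      rw [← h1P (U v)]
      exact hvm
    have hnv : 0 < ‖v‖ := norm_pos_iff.mpr hv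
    -- norm bound
    have hle : ‖μ‖ * ‖v‖ ≤ ‖v‖ := by
      have h1 : ‖U v - P (U v)‖ ^ 2 ≤ ‖U v‖ ^ 2 := by
        have := hpyth (U v)
        nlinarith [sq_nonneg ‖P (U v)‖]
      have h2 : ‖U v - P (U v)‖ ≤ ‖U v‖ := by
        nlinarith [norm_nonneg (U v - P (U v)), norm_nonneg (U v)]
      calc ‖μ‖ * ‖v‖ = ‖μ • v‖ := (norm_smul μ v).symm
        _ = ‖U v - P (U v)‖ := by rw [hUtv]
        _ ≤ ‖U v‖ := h2
        _ = ‖v‖ := hUiso v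
    have hle1 : ‖μ‖ ≤ 1 := by
      by_contra h
      push_neg at h
      nlinarith
    rcases lt_or_eq_of_le hle1 with h | h
    · exact h
    -- ‖μ‖ = 1 : derive contradiction
    exfalso
    have hμ0 : μ ≠ 0 := by
      intro h0; rw [h0] at h; simp at h
    have heq : ‖U v - P (U v)‖ = ‖U v‖ := by
      have h1 : ‖U v - P (U v)‖ = ‖v‖ := by
        rw [hUtv, norm_smul, h]; simp
      rw [h1, hUiso]
    have hPUv : P (U v) = 0 := by
      have hx := hpyth (U v)
      rw [heq] at hx
      have h2 : ‖P (U v)‖ ^ 2 = 0 := by linarith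
      have h3 : ‖P (U v)‖ = 0 := by nlinarith [norm_nonneg (P (U v))]
      exact norm_eq_zero.mp h3
    have hUvEq : U v = μ • v := by
      rw [← hUtv, hPUv]; abel
    have hUvmem : U v ∈ Vᗮ := by
      have hx := hsub (U v); rw [hPUv] at hx; simpa using hx
    have hvmem : v ∈ Vᗮ := by
      have hx : v = μ⁻¹ • (μ • v) := by rw [smul_smul, inv_mul_cancel₀ hμ0, one_smul]
      rw [hx, ← hUvEq]
      exact Submodule.smul_mem _ _ hUvmem
    exact hv (hno v μ hvmem hUvEq)
  refine ⟨part1, ?_⟩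
  intro v μ hv hvm
  by_cases hμ0 : μ = 0
  · rw [hμ0]; simp
  -- μ ≠ 0 : v lies in V⊥, so (1-P) v = v and A v = Ut v
  have hAv : (1 - P) (U ((1 - P) v)) = μ • v := by
    rw [hA] at hvm
    exact hvm
  have hvmem : v ∈ Vᗮ := by
    have h1 : v = μ⁻¹ • ((1 - P) (U ((1 - P) v))) := by
      rw [hAv, smul_smul, inv_mul_cancel₀ hμ0, one_smul]
    have h2 : (1 - P) (U ((1 - P) v)) ∈ Vᗮ := by
      rw [h1P]; exact hsub _
    rw [h1]; exact Submodule.smul_mem _ _ h2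
  have hPv : P v = 0 := by
    rw [hP]
    have h1 : V.orthogonalProjection v = 0 :=
      Submodule.orthogonalProjectionOnto_apply_of_mem_orthogonal hvmem
    simp [h1]
  have h1Pv : (1 - P) v = v := by rw [h1P, hPv, sub_zero]
  have hUtv : Ut v = μ • v := by
    rw [hUt]
    have : ((1 - P) ∘L U) v = (1 - P) (U ((1 - P) v)) := by rw [h1Pv]; rfl
    rw [this, hAv]
  exact part1 v μ hv hUtv
end

section
/- Let U be unitary on a finite-dimensional Hilbert space H and V a subspace with projection P such that U has no eigenvector in V^⊥. Then ‖Ũ^n‖ → 0 as n → ∞ (in fact exponentially fast), where Ũ = (I−P)U. -/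
open Filter
open scoped ENNReal NNReal

lemma exists_eigen_of_mem_spectrum {H : Type*} [NormedAddCommGroup H] [InnerProductSpace ℂ H]
    [FiniteDimensional ℂ H] (T : H →L[ℂ] H) {μ : ℂ} (h : μ ∈ spectrum ℂ T) :
    ∃ v : H, v ≠ 0 ∧ T v = μ • v := by
  by_contra hc
  push_neg at hc
  set S : H →L[ℂ] H := algebraMap ℂ (H →L[ℂ] H) μ - T with hS
  have hSapp : ∀ x, S x = μ • x - T x := by
    intro x
    simp [hS, Algebra.algebraMap_eq_smul_one]
  have hinj : Function.Injective (S : H →ₗ[ℂ] H) := by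
    rw [← LinearMap.ker_eq_bot, LinearMap.ker_eq_bot']
    intro m hm
    by_contra hm0
    have : T m = μ • m := by
      have h2 := hSapp m
      rw [show (S : H →ₗ[ℂ] H) m = S m from rfl] at hm
      rw [hm] at h2
      exact (sub_eq_zero.mp h2.symm).symm
    exact hc m hm0 this
  have hbij : Function.Bijective (S : H →ₗ[ℂ] H) :=
    ⟨hinj, (LinearMap.injective_iff_surjective).mp hinj⟩
  let e : H ≃ₗ[ℂ] H := LinearEquiv.ofBijective (S : H →ₗ[ℂ] H) hbij
  let E : H ≃L[ℂ] H := e.toContinuousLinearEquiv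
  have hEapp : ∀ x, E x = S x := fun _ => rfl
  have : IsUnit S := by
    refine ⟨⟨S, E.symm.toContinuousLinearMap, ?_, ?_⟩, rfl⟩
    · ext x
      have : S (E.symm x) = E (E.symm x) := (hEapp _).symm
      simpa [this] using E.apply_symm_apply x
    · ext x
      have : S x = E x := (hEapp x).symm
      simp [ContinuousLinearMap.mul_apply, this]
  exact (spectrum.mem_iff.mp h) this

/-- Let `U` be unitary on a finite-dimensional Hilbert space `H` and `V`
a subspace with projection `P` such that `U` has no eigenvector in `V⊥`. Then
`‖Ũ^n‖ → 0` as `n → ∞`, in fact exponentially fast, where `Ũ = (I-P)U`. -/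
theorem stmt7 {H : Type*} [NormedAddCommGroup H] [InnerProductSpace ℂ H]
    [FiniteDimensional ℂ H]
    (U : H →L[ℂ] H) (hUiso : ∀ x, ‖U x‖ = ‖x‖) (hUsurj : Function.Surjective U)
    (V : Submodule ℂ H)
    (P : H →L[ℂ] H) (hP : P = V.subtypeL ∘L V.orthogonalProjection)
    (Ut : H →L[ℂ] H) (hUt : Ut = (1 - P) ∘L U)
    (hno : ∀ (v : H) (μ : ℂ), v ∈ Vᗮ → U v = μ • v → v = 0) :
    Tendsto (fun n : ℕ => ‖Ut ^ n‖) atTop (nhds 0) ∧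
    ∃ C > (0 : ℝ), ∃ r : ℝ, 0 < r ∧ r < 1 ∧ ∀ n : ℕ, ‖Ut ^ n‖ ≤ C * r ^ n := by
  haveI : CompleteSpace H := FiniteDimensional.complete ℂ H
  by_cases hH : Subsingleton H
  · have hz : ∀ n : ℕ, ‖Ut ^ n‖ = 0 := by
      intro n
      have : (Ut ^ n) = 0 := Subsingleton.elim _ _
      simp [this]
    constructor
    · simpa [hz] using tendsto_const_nhds
    · exact ⟨1, one_pos, 1/2, by norm_num, by norm_num,
        fun n => by rw [hz]; positivity⟩
  · haveI : Nontrivial H := not_subsingleton_iff_nontrivial.mp hH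
    -- basic facts
    have hPx : ∀ x : H, P x = (V.orthogonalProjection x : H) := by
      intro x; rw [hP]; rfl
    have hUtx : ∀ x : H, Ut x = U x - P (U x) := by
      intro x; rw [hUt]; simp [ContinuousLinearMap.sub_apply]
    have hmemo : ∀ y : H, y - P y ∈ Vᗮ := by
      intro y; rw [hPx]; exact Submodule.sub_starProjection_mem_orthogonal (K := V) y
    have hpyth : ∀ y : H, ‖P y‖ ^ 2 + ‖y - P y‖ ^ 2 = ‖y‖ ^ 2 := by
      intro y
      have hiz : (inner ℂ (P y) (y - P y) : ℂ) = 0 := by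
        have hmem : P y ∈ V := by rw [hPx]; exact (V.orthogonalProjection y).2
        exact (Submodule.mem_orthogonal V (y - P y)).mp (hmemo y) (P y) hmem
      have := norm_add_sq_eq_norm_sq_add_norm_sq_of_inner_eq_zero (P y) (y - P y) hiz
      have hsum : P y + (y - P y) = y := by abel
      rw [hsum] at this
      linarith
    have hUtle : ∀ x : H, ‖Ut x‖ ≤ ‖x‖ := by
      intro x
      rw [hUtx]
      have h1 := hpyth (U x)
      have h2 := hUiso x
      nlinarith [norm_nonneg (U x - P (U x)), norm_nonneg x, norm_nonneg (P (U x))]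
    -- all spectral values have norm < 1
    have hspec : ∀ μ ∈ spectrum ℂ Ut, ‖μ‖₊ < 1 := by
      intro μ hμ
      obtain ⟨v, hv0, hTv⟩ := exists_eigen_of_mem_spectrum Ut hμ
      have hvpos : 0 < ‖v‖ := norm_pos_iff.mpr hv0
      have hle : ‖μ‖ * ‖v‖ ≤ ‖v‖ := by
        have := hUtle v
        rwa [hTv, norm_smul] at this
      have hμle : ‖μ‖ ≤ 1 := by
        by_contra hgt
        push_neg at hgt
        nlinarith
      rcases lt_or_eq_of_le hμle with hlt | heq
      · simpa [← NNReal.coe_lt_coe] using hlt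
      · exfalso
        -- ‖Ut v‖ = ‖v‖ = ‖U v‖ forces P (U v) = 0
        have hnorm : ‖U v - P (U v)‖ = ‖U v‖ := by
          rw [← hUtx, hTv, norm_smul, heq, one_mul, hUiso]
        have hP0 : P (U v) = 0 := by
          have h1 := hpyth (U v)
          rw [hnorm] at h1
          have : ‖P (U v)‖ = 0 := by nlinarith [norm_nonneg (P (U v))]
          exact norm_eq_zero.mp this
        have hUv : U v = μ • v := by
          have := hUtx v
          rw [hP0, sub_zero] at this
          rw [← this, hTv]
        have hvmem : v ∈ Vᗮ := by
          have hμ0 : μ ≠ 0 := by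
            intro h0; rw [h0] at heq; simp at heq
          have hmv : μ • v ∈ Vᗮ := by
            rw [← hTv, hUtx v, hP0, sub_zero, ← sub_zero (U v), ← hP0]
            exact hmemo (U v)
          have := Submodule.smul_mem Vᗮ μ⁻¹ hmv
          rwa [smul_smul, inv_mul_cancel₀ hμ0, one_smul] at this
        exact hv0 (hno v μ hvmem hUv)
    haveI : Nontrivial (H →L[ℂ] H) := ⟨1, 0, by
      obtain ⟨x, hx⟩ := exists_ne (0 : H)
      intro h
      apply hx
      have := ContinuousLinearMap.ext_iff.mp h x
      simpa using this⟩
    have hρ : spectralRadius ℂ Ut < 1 := by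
      have := spectrum.spectralRadius_lt_of_forall_lt (a := Ut) (r := 1) hspec
      simpa using this
    obtain ⟨r, hρr, hr1⟩ := ENNReal.lt_iff_exists_nnreal_btwn.mp hρ
    have hr0 : 0 < r := by
      have : (0 : ℝ≥0∞) < (r : ℝ≥0∞) := lt_of_le_of_lt zero_le hρr
      exact_mod_cast this
    have hr1' : (r : ℝ) < 1 := by exact_mod_cast hr1
    have hr0' : (0 : ℝ) < r := hr0
    -- Gelfand formula
    have hGel := spectrum.pow_nnnorm_pow_one_div_tendsto_nhds_spectralRadius Ut
    have hev : ∀ᶠ n : ℕ in atTop, (‖Ut ^ n‖₊ : ℝ≥0∞) ^ (1 / (n : ℝ)) < (r : ℝ≥0∞) :=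
      hGel.eventually_lt_const hρr
    obtain ⟨N, hN⟩ := eventually_atTop.mp hev
    have hkey : ∀ n : ℕ, N + 1 ≤ n → ‖Ut ^ n‖ ≤ (r : ℝ) ^ n := by
      intro n hn
      have hn0 : (n : ℝ) ≠ 0 := Nat.cast_ne_zero.mpr (by omega)
      have hnpos : (0 : ℝ) < n := by
        have : 0 < n := by omega
        exact_mod_cast this
      have h2 := ENNReal.rpow_lt_rpow (hN n (by omega)) hnpos
      rw [← ENNReal.rpow_mul, one_div, inv_mul_cancel₀ hn0, ENNReal.rpow_one,
        ENNReal.rpow_natCast, ← ENNReal.coe_pow] at h2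
      have h3 : ‖Ut ^ n‖₊ < r ^ n := by exact_mod_cast h2
      have h4 := h3.le
      exact_mod_cast h4
    have hle1 : ∀ n : ℕ, ‖Ut ^ n‖ ≤ 1 := by
      have hUtnorm : ‖Ut‖ ≤ 1 :=
        Ut.opNorm_le_bound zero_le_one (fun x => by simpa using hUtle x)
      intro n
      induction n with
      | zero => simpa [ContinuousLinearMap.one_def] using ContinuousLinearMap.norm_id_le
      | succ k ih =>
        have := norm_mul_le (Ut ^ k) Ut
        rw [← pow_succ] at this
        refine this.trans ?_
        nlinarith [norm_nonneg (Ut ^ k)]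
    set C : ℝ := ((r : ℝ))⁻¹ ^ (N + 1) with hC
    have hCpos : 0 < C := by positivity
    have hC1 : 1 ≤ C := by
      have h5 : 1 ≤ (r : ℝ)⁻¹ := (one_le_inv₀ hr0').mpr hr1'.le
      exact one_le_pow₀ h5
    have hCr : C * (r : ℝ) ^ (N + 1) = 1 := by
      rw [hC, ← mul_pow, inv_mul_cancel₀ (ne_of_gt hr0'), one_pow]
    have hbound : ∀ n : ℕ, ‖Ut ^ n‖ ≤ C * (r : ℝ) ^ n := by
      intro n
      rcases le_or_gt (N + 1) n with h | h
      · exact (hkey n h).trans (le_mul_of_one_le_left (by positivity) hC1)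
      · refine (hle1 n).trans ?_
        have h4 : (r : ℝ) ^ (N + 1) ≤ (r : ℝ) ^ n :=
          pow_le_pow_of_le_one hr0'.le hr1'.le (by omega)
        calc (1 : ℝ) = C * (r : ℝ) ^ (N + 1) := hCr.symm
          _ ≤ C * (r : ℝ) ^ n := by nlinarith
    refine ⟨?_, C, hCpos, r, hr0', hr1', hbound⟩
    have htc := (tendsto_pow_atTop_nhds_zero_of_lt_one hr0'.le hr1').const_mul C
    rw [mul_zero] at htc
    exact squeeze_zero (fun n => norm_nonneg _) hbound htc
end

section
/- Let U be unitary on a finite-dimensional complex Hilbert space H with spectral projectors E_k onto its eigenspaces, and let V be a subspace such that H = span of the E_kV (i.e., U has no eigenvector in V^⊥). With P the projection onto V, Ũ = (I−P)U, and a_n = PUŨ^{n−1}P, one has Σ_{n≥1} n‖a_n‖_F² = dim H. -/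
open ContinuousLinearMap Filter
open scoped ENNReal NNReal

section Aux
variable {H : Type*} [NormedAddCommGroup H] [InnerProductSpace ℂ H] [FiniteDimensional ℂ H]

theorem stmt9_trace_re_eq_sum (T : H →L[ℂ] H) :
    (LinearMap.trace ℂ H ((adjoint T * T : H →L[ℂ] H) : H →ₗ[ℂ] H)).re
      = ∑ i, ‖T (stdOrthonormalBasis ℂ H i)‖ ^ 2 := by
  set b := stdOrthonormalBasis ℂ H with hb
  rw [LinearMap.trace_eq_matrix_trace ℂ b.toBasis, Matrix.trace]
  have h1 : ∀ i, Matrix.diag (LinearMap.toMatrix b.toBasis b.toBasis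
      ((adjoint T * T : H →L[ℂ] H) : H →ₗ[ℂ] H)) i = ((‖T (b i)‖ : ℂ)^2) := by
    intro i
    rw [Matrix.diag, LinearMap.toMatrix_apply, OrthonormalBasis.coe_toBasis_repr_apply,
      OrthonormalBasis.repr_apply_apply, OrthonormalBasis.coe_toBasis]
    show (inner ℂ (b i) ((adjoint T) (T (b i))) : ℂ) = _
    rw [ContinuousLinearMap.adjoint_inner_right, inner_self_eq_norm_sq_to_K]
    norm_num
  rw [Finset.sum_congr rfl (fun i _ => h1 i), Complex.re_sum]
  simp [← Complex.ofReal_pow]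

theorem stmt9_split (P X : H →L[ℂ] H) (hP2 : P * P = P) (hPs : adjoint P = P) :
    adjoint (P * X) * (P * X) + adjoint ((1 - P) * X) * ((1 - P) * X) = adjoint X * X := by
  have hadj : ∀ A B : H →L[ℂ] H, adjoint (A * B) = adjoint B * adjoint A := by
    intro A B
    simp only [← ContinuousLinearMap.star_eq_adjoint, star_mul]
  have hQ2 : ((1 : H →L[ℂ] H) - P) * (1 - P) = 1 - P := by
    rw [sub_mul, one_mul, mul_sub, mul_one, hP2, sub_self, sub_zero]
  have hQs : adjoint ((1 : H →L[ℂ] H) - P) = 1 - P := by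
    simp only [← ContinuousLinearMap.star_eq_adjoint] at hPs ⊢
    rw [star_sub, star_one, hPs]
  rw [hadj, hadj, hPs, hQs]
  calc adjoint X * P * (P * X) + adjoint X * (1 - P) * ((1 - P) * X)
      = adjoint X * ((P * P) * X) + adjoint X * (((1 - P) * (1 - P)) * X) := by
        simp only [mul_assoc]
    _ = adjoint X * ((P + (1 - P)) * X) := by rw [hP2, hQ2, add_mul, mul_add]
    _ = adjoint X * X := by rw [add_sub_cancel, one_mul]

theorem stmt9_decay [Nontrivial H]
    (U : H →L[ℂ] H) (hU2 : adjoint U * U = 1)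
    (V : Submodule ℂ H)
    (P : H →L[ℂ] H) (hP : P = V.subtypeL ∘L V.orthogonalProjection)
    (Ut : H →L[ℂ] H) (hUt : Ut = (1 - P) * U)
    (hno : ∀ (v : H) (μ : ℂ), v ∈ Vᗮ → U v = μ • v → v = 0) :
    ∃ r : ℝ, 0 ≤ r ∧ r < 1 ∧ ∀ᶠ n : ℕ in atTop, ‖Ut ^ n‖ ≤ r ^ n := by
  haveI : CompleteSpace H := FiniteDimensional.complete ℂ H
  have hUiso : ∀ x : H, ‖U x‖ = ‖x‖ := by
    intro x
    have h1 : (inner ℂ (U x) (U x) : ℂ) = inner ℂ x x := by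
      rw [← ContinuousLinearMap.adjoint_inner_right]
      have := congrFun (congrArg (fun (T : H →L[ℂ] H) => T.toFun) hU2) x
      rw [show (adjoint U) (U x) = x from this]
    rw [inner_self_eq_norm_sq_to_K (𝕜 := ℂ), inner_self_eq_norm_sq_to_K (𝕜 := ℂ)] at h1
    have h2 : ‖U x‖ ^ 2 = ‖x‖ ^ 2 := by exact_mod_cast h1
    nlinarith [norm_nonneg (U x), norm_nonneg x]
  have hPmem : ∀ y : H, P y ∈ V := by
    intro y; rw [hP]; exact (V.orthogonalProjection y).2
  have hQmem : ∀ y : H, y - P y ∈ Vᗮ := by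
    intro y; rw [hP]; exact V.sub_starProjection_mem_orthogonal y
  have hpyth : ∀ y : H, ‖y‖ ^ 2 = ‖P y‖ ^ 2 + ‖y - P y‖ ^ 2 := by
    intro y
    have h0 : (inner ℂ (P y) (y - P y) : ℂ) = 0 :=
      Submodule.inner_right_of_mem_orthogonal (hPmem y) (hQmem y)
    have := @norm_add_sq ℂ _ _ _ _ (P y) (y - P y)
    simp only [h0, map_zero, mul_zero, add_zero, zero_mul] at this
    rw [add_sub_cancel] at this
    simpa using this
  have hspec : ∀ z ∈ spectrum ℂ Ut, ‖z‖₊ < 1 := by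
    intro z hz
    by_contra hge
    push_neg at hge
    have hz1 : (1 : ℝ) ≤ ‖z‖ := by exact_mod_cast hge
    have hnu := spectrum.mem_iff.mp hz
    rw [ContinuousLinearMap.isUnit_iff_bijective] at hnu
    have hni : ¬ Function.Injective (algebraMap ℂ (H →L[ℂ] H) z - Ut) := by
      intro hinj
      exact hnu ⟨hinj, (LinearMap.injective_iff_surjective
        (f := ((algebraMap ℂ (H →L[ℂ] H) z - Ut : H →L[ℂ] H) : H →ₗ[ℂ] H))).mp hinj⟩
    rw [Function.not_injective_iff] at hni
    obtain ⟨x, y, hxy, hne⟩ := hni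
    set v := x - y with hv
    have hvne : v ≠ 0 := sub_ne_zero.mpr hne
    have hUtv : Ut v = z • v := by
      have h3 : (algebraMap ℂ (H →L[ℂ] H) z - Ut) v = 0 := by
        simp only [map_sub, hv]
        rw [show (algebraMap ℂ (H →L[ℂ] H) z - Ut) x
            = (algebraMap ℂ (H →L[ℂ] H) z - Ut) y from hxy]
        abel
      have h2 : (algebraMap ℂ (H →L[ℂ] H) z) v = z • v := by
        rw [Algebra.algebraMap_eq_smul_one]; simp
      rw [ContinuousLinearMap.sub_apply, h2, sub_eq_zero] at h3
      exact h3.symm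
    have hUtv' : U v - P (U v) = Ut v := by
      rw [hUt]; simp [ContinuousLinearMap.mul_apply, ContinuousLinearMap.sub_apply]
    have h1 : ‖v‖ ^ 2 = ‖P (U v)‖ ^ 2 + (‖z‖ * ‖v‖) ^ 2 := by
      have h5 := hpyth (U v)
      rw [hUiso v, hUtv', hUtv, norm_smul] at h5
      simpa using h5
    have hvpos : 0 < ‖v‖ := norm_pos_iff.mpr hvne
    have h3 : ‖v‖ ≤ ‖z‖ * ‖v‖ := le_mul_of_one_le_left (norm_nonneg v) hz1
    have h4 : ‖v‖ ^ 2 ≤ (‖z‖ * ‖v‖) ^ 2 := by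
      apply pow_le_pow_left₀ (norm_nonneg v) h3
    have hP0 : ‖P (U v)‖ ^ 2 ≤ 0 := by linarith
    have hP0' : P (U v) = 0 := by
      have h6 : ‖P (U v)‖ = 0 := by nlinarith [norm_nonneg (P (U v))]
      exact norm_eq_zero.mp h6
    have hUv : U v = z • v := by
      have h7 := hUtv'
      rw [hP0', sub_zero] at h7
      rw [h7, hUtv]
    have hzne : z ≠ 0 := by
      intro h; rw [h] at hz1; simp at hz1; linarith
    have hvmem : v ∈ Vᗮ := by
      have h1 : Ut v ∈ Vᗮ := by rw [← hUtv']; exact hQmem (U v)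
      have h2 : v = z⁻¹ • Ut v := by rw [hUtv, smul_smul, inv_mul_cancel₀ hzne, one_smul]
      rw [h2]; exact Submodule.smul_mem _ _ h1
    exact hvne (hno v z hvmem hUv)
  haveI : Nontrivial (H →L[ℂ] H) := by
    obtain ⟨x, hx⟩ := exists_ne (0 : H)
    exact ⟨1, 0, fun h => hx (by
      simpa using congrFun (congrArg (fun T : H →L[ℂ] H => T.toFun) h) x)⟩
  have hrad : spectralRadius ℂ Ut < ((1 : ℝ≥0) : ℝ≥0∞) :=
    spectrum.spectralRadius_lt_of_forall_lt Ut hspec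
  obtain ⟨r, hρr, hr1⟩ := ENNReal.lt_iff_exists_nnreal_btwn.mp hrad
  have hr1' : (r : ℝ) < 1 := by
    have : (r : ℝ≥0) < 1 := by exact_mod_cast hr1
    exact_mod_cast this
  refine ⟨r, r.coe_nonneg, hr1', ?_⟩
  have hgel := spectrum.pow_nnnorm_pow_one_div_tendsto_nhds_spectralRadius Ut
  have hev : ∀ᶠ n : ℕ in atTop, (‖Ut ^ n‖₊ : ℝ≥0∞) ^ (1 / (n : ℝ)) < (r : ℝ≥0∞) :=
    hgel.eventually_lt_const hρr
  filter_upwards [hev, eventually_ge_atTop 1] with n hn hn1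
  have hne : (n : ℝ) ≠ 0 := by positivity
  have h2 : ((‖Ut ^ n‖₊ : ℝ≥0∞) ^ (1 / (n : ℝ))) ^ (n : ℝ) < ((r : ℝ≥0∞)) ^ (n : ℝ) :=
    ENNReal.rpow_lt_rpow hn (by positivity)
  rw [← ENNReal.rpow_mul, one_div_mul_cancel hne, ENNReal.rpow_one] at h2
  rw [ENNReal.rpow_natCast, ← ENNReal.coe_pow, ENNReal.coe_lt_coe] at h2
  have h8 := h2.le
  rw [← NNReal.coe_le_coe] at h8
  simpa using h8

end Aux

set_option maxHeartbeats 1000000 in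
/-- Let `U` be unitary on a finite-dimensional complex Hilbert space `H`
and `V` a subspace such that no nonzero eigenvector of `U` is orthogonal to `V`
(equivalently, `H` is spanned by the spaces `E_k V`). With `P` the orthogonal projection
onto `V`, `Ũ = (I-P)U`, `a_n = P U Ũ^{n-1} P`, one has
`Σ_{n≥1} n ‖a_n‖_F² = dim H`, where `‖T‖_F² = Tr(T† T)`. -/
theorem stmt9 {H : Type*} [NormedAddCommGroup H] [InnerProductSpace ℂ H]
    [FiniteDimensional ℂ H]
    (U : H →L[ℂ] H) (hU1 : U * adjoint U = 1) (hU2 : adjoint U * U = 1)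
    (V : Submodule ℂ H)
    (P : H →L[ℂ] H) (hP : P = V.subtypeL ∘L V.orthogonalProjection)
    (Ut : H →L[ℂ] H) (hUt : Ut = (1 - P) * U)
    (a : ℕ → (H →L[ℂ] H)) (ha : ∀ n, 1 ≤ n → a n = P * U * Ut ^ (n - 1) * P)
    (hno : ∀ (v : H) (μ : ℂ), v ∈ Vᗮ → U v = μ • v → v = 0) :
    HasSum
      (fun n : ℕ =>
        ((n : ℝ) + 1) *
          (LinearMap.trace ℂ H
            ((adjoint (a (n + 1)) * a (n + 1) : H →L[ℂ] H) : H →ₗ[ℂ] H)).re)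
      (Module.finrank ℂ H : ℝ) := by
  by_cases hH : Nontrivial H
  swap
  · rw [not_nontrivial_iff_subsingleton] at hH
    have hf : ∀ n : ℕ, ((adjoint (a (n + 1)) * a (n + 1) : H →L[ℂ] H) : H →ₗ[ℂ] H) = 0 :=
      fun n => Subsingleton.elim _ _
    have hd : (Module.finrank ℂ H : ℝ) = 0 := by
      rw [Module.finrank_zero_of_subsingleton]; norm_num
    simp only [hf, map_zero, Complex.zero_re, mul_zero, hd]
    exact hasSum_zero
  haveI := hH
  haveI : CompleteSpace H := FiniteDimensional.complete ℂ H
  set d := Module.finrank ℂ H with hd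
  -- basic projection facts
  have hadj : ∀ A B : H →L[ℂ] H, adjoint (A * B) = adjoint B * adjoint A := by
    intro A B; simp only [← ContinuousLinearMap.star_eq_adjoint, star_mul]
  have hP2 : P * P = P := by
    rw [hP]; ext x
    simp [ContinuousLinearMap.mul_apply, Submodule.orthogonalProjectionOnto_mem_subspace_eq_self, Submodule.starProjection_mem_subspace_eq_self, Submodule.starProjection_eq_self_iff]
  have hPs : adjoint P = P := by
    rw [← ContinuousLinearMap.star_eq_adjoint, hP]
    exact isSelfAdjoint_starProjection V
  have hQ2 : ((1 : H →L[ℂ] H) - P) * (1 - P) = 1 - P := by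
    rw [sub_mul, one_mul, mul_sub, mul_one, hP2, sub_self, sub_zero]
  have hQs : adjoint ((1 : H →L[ℂ] H) - P) = 1 - P := by
    simp only [← ContinuousLinearMap.star_eq_adjoint] at hPs ⊢
    rw [star_sub, star_one, hPs]
  -- numerical sequences
  set g : (H →L[ℂ] H) → ℝ := fun T =>
    (LinearMap.trace ℂ H ((adjoint T * T : H →L[ℂ] H) : H →ₗ[ℂ] H)).re with hgdef
  have hgnn : ∀ T, 0 ≤ g T := by
    intro T; rw [hgdef]; simp only; rw [stmt9_trace_re_eq_sum]; positivity
  have hgle : ∀ T : H →L[ℂ] H, g T ≤ (d : ℝ) * ‖T‖ ^ 2 := by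
    intro T
    rw [hgdef]; simp only; rw [stmt9_trace_re_eq_sum]
    calc ∑ i, ‖T (stdOrthonormalBasis ℂ H i)‖ ^ 2
        ≤ ∑ _i : Fin d, ‖T‖ ^ 2 := by
          apply Finset.sum_le_sum
          intro i _
          have h1 := T.le_opNorm (stdOrthonormalBasis ℂ H i)
          have h2 : ‖stdOrthonormalBasis ℂ H i‖ = 1 :=
            (stdOrthonormalBasis ℂ H).orthonormal.1 i
          rw [h2, mul_one] at h1
          exact pow_le_pow_left₀ (norm_nonneg _) h1 2
      _ = (d : ℝ) * ‖T‖ ^ 2 := by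
          rw [Finset.sum_const, Finset.card_univ, Fintype.card_fin, nsmul_eq_mul]
  set s : ℕ → ℝ := fun k =>
    (LinearMap.trace ℂ H ((Ut ^ k * adjoint (Ut ^ k) : H →L[ℂ] H) : H →ₗ[ℂ] H)).re with hsdef
  have hsg : ∀ k, s k = g (Ut ^ k) := by
    intro k
    rw [hsdef, hgdef]; simp only
    exact congrArg Complex.re (LinearMap.trace_mul_comm ℂ
      ((Ut ^ k : H →L[ℂ] H) : H →ₗ[ℂ] H) ((adjoint (Ut ^ k) : H →L[ℂ] H) : H →ₗ[ℂ] H))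
  set c : ℕ → ℝ := fun n => g (a n) with hcdef
  set t : ℕ → ℝ := fun k => g (Ut ^ k * P) with htdef
  -- operator identities
  have key1 : ∀ k : ℕ, adjoint (Ut ^ k * P) * (Ut ^ k * P)
      = adjoint (a (k+1)) * a (k+1) + adjoint (Ut ^ (k+1) * P) * (Ut ^ (k+1) * P) := by
    intro k
    have hak : a (k+1) = P * (U * (Ut ^ k * P)) := by
      rw [ha (k+1) (by omega)]
      simp only [Nat.add_sub_cancel]
      rw [mul_assoc, mul_assoc]
    have hbk : Ut ^ (k+1) * P = (1 - P) * (U * (Ut ^ k * P)) := by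
      have h9 : ∀ W : H →L[ℂ] H, Ut * W = (1 - P) * (U * W) := by
        intro W; rw [hUt, mul_assoc]
      rw [pow_succ', mul_assoc, h9]
    rw [hak, hbk, stmt9_split P (U * (Ut ^ k * P)) hP2 hPs]
    calc adjoint (Ut ^ k * P) * (Ut ^ k * P)
        = adjoint (Ut ^ k * P) * ((adjoint U * U) * (Ut ^ k * P)) := by rw [hU2, one_mul]
      _ = adjoint (Ut ^ k * P) * adjoint U * (U * (Ut ^ k * P)) := by
          simp only [mul_assoc]
      _ = adjoint (U * (Ut ^ k * P)) * (U * (Ut ^ k * P)) := by rw [hadj U (Ut ^ k * P)]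
  have hQUadj : Ut * adjoint Ut = 1 - P := by
    rw [hUt, hadj, hQs]
    calc (1 - P) * U * (adjoint U * (1 - P))
        = (1 - P) * ((U * adjoint U) * (1 - P)) := by simp only [mul_assoc]
      _ = (1 - P) * (1 - P) := by rw [hU1, one_mul]
      _ = 1 - P := hQ2
  have key2 : ∀ k : ℕ, (Ut ^ k * P) * adjoint (Ut ^ k * P)
      = Ut ^ k * adjoint (Ut ^ k) - Ut ^ (k+1) * adjoint (Ut ^ (k+1)) := by
    intro k
    have h1 : Ut ^ (k+1) * adjoint (Ut ^ (k+1)) = Ut ^ k * ((1 - P) * adjoint (Ut ^ k)) := by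
      rw [pow_succ, hadj]
      calc Ut ^ k * Ut * (adjoint Ut * adjoint (Ut ^ k))
          = Ut ^ k * ((Ut * adjoint Ut) * adjoint (Ut ^ k)) := by simp only [mul_assoc]
        _ = Ut ^ k * ((1 - P) * adjoint (Ut ^ k)) := by rw [hQUadj]
    rw [hadj, hPs, h1, ← mul_sub, sub_mul, one_mul, sub_sub_cancel]
    simp only [← mul_assoc]
    rw [mul_assoc (Ut ^ k) P P, hP2]
  -- numeric recurrences
  have htc : ∀ k, t k = c (k+1) + t (k+1) := by
    intro k
    rw [htdef, hcdef, hgdef]; simp only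
    rw [key1 k]
    push_cast [map_add]
    rw [Complex.add_re]
  have hts : ∀ k, t k = s k - s (k+1) := by
    intro k
    rw [htdef, hgdef, hsdef]; simp only
    rw [show (LinearMap.trace ℂ H ((adjoint (Ut ^ k * P) * (Ut ^ k * P) : H →L[ℂ] H) : H →ₗ[ℂ] H))
        = LinearMap.trace ℂ H (((Ut ^ k * P) * adjoint (Ut ^ k * P) : H →L[ℂ] H) : H →ₗ[ℂ] H)
      from LinearMap.trace_mul_comm ℂ _ _]
    rw [key2 k]
    push_cast [map_sub]
    rw [Complex.sub_re]
  have hs0 : s 0 = (d : ℝ) := by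
    rw [hsdef]; simp only [pow_zero]
    rw [show ((1 : H →L[ℂ] H) * adjoint (1 : H →L[ℂ] H)) = 1 by
      simp [← ContinuousLinearMap.star_eq_adjoint]]
    rw [show (((1 : H →L[ℂ] H)) : H →ₗ[ℂ] H) = 1 from rfl, LinearMap.trace_one]
    simp [hd]
  have hsnn : ∀ k, 0 ≤ s k := fun k => (hsg k) ▸ hgnn _
  have hsle : ∀ k, s k ≤ (d : ℝ) * ‖Ut ^ k‖ ^ 2 := fun k => (hsg k) ▸ hgle _
  have hcnn : ∀ n, 0 ≤ c n := fun n => hgnn _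
  -- partial sums
  have hps : ∀ N : ℕ, ∑ n ∈ Finset.range N, ((n : ℝ) + 1) * c (n+1)
      = s 0 - ((N : ℝ) + 1) * s N + (N : ℝ) * s (N+1) := by
    intro N
    induction N with
    | zero => simp
    | succ N ih =>
        have hc' : c (N+1) = s N - 2 * s (N+1) + s (N+2) := by
          have e1 := htc N
          have e2 := hts N
          have e3 := hts (N+1)
          linarith
        rw [Finset.sum_range_succ, ih, hc']
        push_cast
        ring
  -- decay
  obtain ⟨r, hr0, hr1, hev⟩ := stmt9_decay U hU2 V P hP Ut hUt hno
  set q : ℝ := r ^ 2 with hq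
  have hq0 : 0 ≤ q := by positivity
  have hq1 : q < 1 := by
    rw [hq]; exact pow_lt_one₀ hr0 hr1 two_ne_zero
  have hupper : ∀ᶠ N : ℕ in atTop, s N ≤ (d : ℝ) * q ^ N := by
    filter_upwards [hev] with n h
    calc s n ≤ (d : ℝ) * ‖Ut ^ n‖ ^ 2 := hsle n
      _ ≤ (d : ℝ) * (r ^ n) ^ 2 := by
          apply mul_le_mul_of_nonneg_left _ (by positivity)
          exact pow_le_pow_left₀ (norm_nonneg _) h 2
      _ = (d : ℝ) * q ^ n := by rw [hq, ← pow_mul, ← pow_mul, Nat.mul_comm]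
  have hgeo : Tendsto (fun n : ℕ => ((n : ℝ) + 1) * ((d : ℝ) * q ^ n)) atTop (nhds 0) := by
    have h1 : Tendsto (fun n : ℕ => (n : ℝ) ^ 1 * q ^ n) atTop (nhds 0) :=
      tendsto_pow_const_mul_const_pow_of_lt_one 1 hq0 hq1
    have h2 : Tendsto (fun n : ℕ => q ^ n) atTop (nhds 0) :=
      tendsto_pow_atTop_nhds_zero_of_lt_one hq0 hq1
    have h3 := ((h1.add h2).const_mul (d : ℝ))
    rw [add_zero, mul_zero] at h3
    convert h3 using 2 with n
    ring
  have hE : Tendsto (fun N : ℕ => ((N : ℝ) + 1) * s N) atTop (nhds 0) := by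
    apply squeeze_zero' (Eventually.of_forall fun n => mul_nonneg (by positivity) (hsnn n))
    · filter_upwards [hupper] with n h
      exact mul_le_mul_of_nonneg_left h (by positivity)
    · exact hgeo
  have hstend : Tendsto s atTop (nhds 0) := by
    apply squeeze_zero' (Eventually.of_forall hsnn)
    · filter_upwards [hupper] with n h; exact h
    · have h2 : Tendsto (fun n : ℕ => q ^ n) atTop (nhds 0) :=
        tendsto_pow_atTop_nhds_zero_of_lt_one hq0 hq1
      simpa using h2.const_mul (d : ℝ)
  -- assemble limit
  have hE1 : Tendsto (fun N : ℕ => ((N : ℝ) + 1 + 1) * s (N + 1)) atTop (nhds 0) := by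
    have h := hE.comp (tendsto_add_atTop_nat 1)
    have heq : (fun N : ℕ => ((N : ℝ) + 1 + 1) * s (N + 1))
        = (fun N : ℕ => ((N : ℝ) + 1) * s N) ∘ (fun N : ℕ => N + 1) := by
      funext n; simp only [Function.comp_apply]; push_cast; ring
    rw [heq]; exact h
  have hs1 : Tendsto (fun N : ℕ => s (N + 1)) atTop (nhds 0) :=
    hstend.comp (tendsto_add_atTop_nat 1)
  have hlim : Tendsto (fun N : ℕ => s 0 - ((N : ℝ) + 1) * s N + (N : ℝ) * s (N+1))
      atTop (nhds (d : ℝ)) := by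
    have heq : ∀ N : ℕ, s 0 - ((N : ℝ) + 1) * s N + (N : ℝ) * s (N+1)
        = s 0 - ((N : ℝ) + 1) * s N + (((N : ℝ) + 1 + 1) * s (N + 1) - 2 * s (N + 1)) := by
      intro N; ring
    simp only [heq]
    have := ((tendsto_const_nhds (x := s 0)).sub hE).add (hE1.sub (hs1.const_mul 2))
    simpa [hs0] using this
  rw [hasSum_iff_tendsto_nat_of_nonneg]
  · have : Tendsto (fun N : ℕ => ∑ n ∈ Finset.range N, ((n : ℝ) + 1) * c (n+1))
        atTop (nhds (d : ℝ)) := by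
      simp only [hps]; exact hlim
    exact this
  · intro n
    exact mul_nonneg (by positivity) (hcnn (n+1))
end
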